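/- Let p be an odd prime and suppose d and c are integers with 1 ≤ c ≤ d, where d = k·p^e + r with 1 ≤ k ≤ (p-1)/2, e ≥ 0, and r ∈ {(p^e-1)/2, (p^e+1)/2}. Then the integer det M_{d,c,c,c} is not divisible by p; equivalently, the p-adic valuation of the numerator ∏_{j=0}^{c-1} C(d+j, c) equals the p-adic valuation of the denominator ∏_{j=0}^{c-1} C(c+j, c). -/

import Mathlib

open Finset

/-- The Toeplitz matrix `M_{d,c,c,c}` of binomial coefficients, with `(i,j)` entry
`C(d, c+i-j)` (interpreted as `0` when `c+i-j < 0`). -/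
noncomputable def toeplitzBinom (d c : ℕ) : Matrix (Fin c) (Fin c) ℤ :=
  Matrix.of fun i j : Fin c =>
    if (j : ℕ) ≤ c + (i : ℕ) then (d.choose (c + (i : ℕ) - (j : ℕ)) : ℤ) else 0

open Polynomial

lemma divmod_unique {q a b N : ℕ} (hq : 0 < q) (hb : b < q) (hN : N = q * a + b) :
    N / q = a ∧ N % q = b :=
  (Nat.div_mod_unique hq).2 ⟨by omega, hb⟩

lemma fstep (q s N : ℕ) (hq : 0 < q) (hs : s < q) :
    (if q ≤ s + N % q then 1 else 0) + s * (N / q) + (N % q - (q - s)) =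
      s * ((N + 1) / q) + ((N + 1) % q - (q - s)) := by
  have hb : N % q < q := Nat.mod_lt _ hq
  have hN : q * (N / q) + N % q = N := Nat.div_add_mod N q
  by_cases hbq : N % q + 1 = q
  · have hmulq : q * (N / q + 1) = q * (N / q) + q := Nat.mul_succ q _
    obtain ⟨hdiv, hmod⟩ := divmod_unique hq hq (show N + 1 = q * (N / q + 1) + 0 by omega)
    have hmul : s * (N / q + 1) = s * (N / q) + s := Nat.mul_succ s _
    rw [hdiv, hmod, hmul]
    split_ifs <;> omega
  · obtain ⟨hdiv, hmod⟩ := divmod_unique hq (show N % q + 1 < q by omega)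
      (show N + 1 = q * (N / q) + (N % q + 1) by omega)
    rw [hdiv, hmod]
    split_ifs <;> omega

lemma fcard (q s x : ℕ) (hq : 0 < q) (hs : s < q) : ∀ n : ℕ,
    ((range n).filter (fun j => q ≤ s + (x + j) % q)).card + s * (x / q) + (x % q - (q - s)) =
      s * ((x + n) / q) + ((x + n) % q - (q - s)) := by
  intro n
  induction n with
  | zero => simp
  | succ n ih =>
    rw [Finset.range_add_one, Finset.filter_insert]
    have hstep := fstep q s (x + n) hq hs
    have hxn : x + (n + 1) = (x + n) + 1 := by omega
    rw [hxn]
    split_ifs with hcond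
    · rw [Finset.card_insert_of_notMem (by simp)]
      rw [if_pos hcond] at hstep
      omega
    · rw [if_neg hcond] at hstep
      omega

lemma central (q c d : ℕ) (hq : 0 < q) (hcd : c ≤ d)
    (hctr : 2 * (d % q) + 1 = q ∨ 2 * (d % q) = q + 1) :
    (c % q) * (d / q) + (d % q - (q - c % q)) =
      ((c % q) * (c / q) + (c % q - (q - c % q))) +
        ((c % q) * ((d - c) / q) + ((d - c) % q - (q - c % q))) := by
  set A := d / q with hA
  set h := d % q with hh
  set C := c / q with hC
  set γ := c % q with hγ
  have hhq : h < q := Nat.mod_lt _ hq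
  have hγq : γ < q := Nat.mod_lt _ hq
  have hdd : q * A + h = d := Nat.div_add_mod d q
  have hcc : q * C + γ = c := Nat.div_add_mod c q
  have hAC : C ≤ A := Nat.div_le_div_right hcd
  by_cases hγh : γ ≤ h
  · have hq1 : q * (A - C) + q * C = q * A := by rw [← Nat.mul_add, Nat.sub_add_cancel hAC]
    obtain ⟨hdiv, hmod⟩ := divmod_unique hq (show h - γ < q by omega)
      (show d - c = q * (A - C) + (h - γ) by omega)
    have hg1 : γ * (A - C) + γ * C = γ * A := by rw [← Nat.mul_add, Nat.sub_add_cancel hAC]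
    rw [hdiv, hmod]
    omega
  · have hCA : C < A := by
      rcases Nat.lt_or_ge C A with h1 | h1
      · exact h1
      · have : q * A ≤ q * C := Nat.mul_le_mul_left q h1
        omega
    have hAC1 : C + 1 ≤ A := hCA
    have hq1 : q * (A - C - 1) + (q * C + q) = q * A := by
      rw [← Nat.mul_succ, ← Nat.mul_add]
      congr 1
      omega
    obtain ⟨hdiv, hmod⟩ := divmod_unique hq (show q + h - γ < q by omega)
      (show d - c = q * (A - C - 1) + (q + h - γ) by omega)
    have hg1 : γ * (A - C - 1) + (γ * C + γ) = γ * A := by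
      rw [← Nat.mul_succ, ← Nat.mul_add]
      congr 1
      omega
    rw [hdiv, hmod]
    omega

lemma count_eq_central (q c d : ℕ) (hq : 0 < q) (hcd : c ≤ d)
    (hctr : 2 * (d % q) + 1 = q ∨ 2 * (d % q) = q + 1) :
    ((range c).filter (fun j => q ≤ c % q + (d - c + j) % q)).card =
      ((range c).filter (fun j => q ≤ c % q + j % q)).card := by
  have hs : c % q < q := Nat.mod_lt _ hq
  have h1 := fcard q (c % q) (d - c) hq hs c
  have h2 := fcard q (c % q) 0 hq hs c
  rw [Nat.sub_add_cancel hcd] at h1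
  simp only [Nat.zero_add, Nat.zero_div, Nat.zero_mod, Nat.mul_zero] at h2
  have h3 := central q c d hq hcd hctr
  omega

lemma count_eq_small (q c d : ℕ) (hq : 0 < q) (hcd : c ≤ d) (hsm : 2 * d ≤ q + 1) :
    ((range c).filter (fun j => q ≤ c % q + (d - c + j) % q)).card =
      ((range c).filter (fun j => q ≤ c % q + j % q)).card := by
  rcases Nat.eq_or_lt_of_le hcd with heq | hlt
  · subst heq
    simp
  · have hcq : c % q = c := Nat.mod_eq_of_lt (by omega)
    rw [Finset.filter_eq_empty_iff.2, Finset.filter_eq_empty_iff.2]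
    · intro j hj
      rw [Finset.mem_range] at hj
      rw [hcq, Nat.mod_eq_of_lt (show j < q by omega)]
      omega
    · intro j hj
      rw [Finset.mem_range] at hj
      rw [hcq, Nat.mod_eq_of_lt (show d - c + j < q by omega)]
      omega

lemma dmod (p k e r i : ℕ) (hpodd : Odd p) (hp3 : 3 ≤ p)
    (hr : 2 * r = p ^ e - 1 ∨ 2 * r = p ^ e + 1) (hi1 : 1 ≤ i) (hie : i ≤ e) :
    2 * ((k * p ^ e + r) % p ^ i) + 1 = p ^ i ∨ 2 * ((k * p ^ e + r) % p ^ i) = p ^ i + 1 := by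
  set q := p ^ i with hqdef
  have hq : 0 < q := pow_pos (by omega) i
  have hqp : p ≤ q := by
    calc p = p ^ 1 := (pow_one p).symm
    _ ≤ q := Nat.pow_le_pow_right (by omega) hi1
  have hpe : p ^ e = q * p ^ (e - i) := by
    rw [hqdef, ← pow_add]
    congr 1
    omega
  have hdr : (k * p ^ e + r) % q = r % q := by
    conv_lhs => rw [hpe]
    rw [show k * (q * p ^ (e - i)) = q * (k * p ^ (e - i)) by ring, Nat.mul_add_mod]
  rw [hdr]
  obtain ⟨v, hv⟩ := hpodd.pow (n := i)
  obtain ⟨u, hu⟩ := hpodd.pow (n := e - i)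
  have hqt : q * p ^ (e - i) = 2 * (q * u) + q := by rw [hu]; ring
  have hpe1 : 1 ≤ p ^ e := Nat.one_le_pow _ _ (by omega)
  rcases hr with hr | hr
  · left
    obtain ⟨hdiv, hmod⟩ := divmod_unique hq (show v < q by omega)
      (show r = q * u + v by omega)
    omega
  · right
    obtain ⟨hdiv, hmod⟩ := divmod_unique hq (show v + 1 < q by omega)
      (show r = q * u + (v + 1) by omega)
    omega

lemma dsmall (p k e r i : ℕ) (hpodd : Odd p) (hp3 : 3 ≤ p) (hkp : k ≤ (p - 1) / 2)
    (hr : 2 * r = p ^ e - 1 ∨ 2 * r = p ^ e + 1) (hie : e < i) :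
    2 * (k * p ^ e + r) ≤ p ^ i + 1 := by
  obtain ⟨w, hw⟩ := hpodd
  have hk2 : 2 * k ≤ p - 1 := by omega
  have h1 : 2 * k * p ^ e ≤ (p - 1) * p ^ e := Nat.mul_le_mul_right _ hk2
  have hpe1 : 1 ≤ p ^ e := Nat.one_le_pow _ _ (by omega)
  have h2 : 2 * r ≤ p ^ e + 1 := by omega
  have h3 : (p - 1) * p ^ e + p ^ e = p ^ (e + 1) := by
    rw [pow_succ]
    have : p - 1 + 1 = p := by omega
    calc (p - 1) * p ^ e + p ^ e = (p - 1 + 1) * p ^ e := by ring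
    _ = p ^ e * p := by rw [this]; ring
  have h4 : p ^ (e + 1) ≤ p ^ i := Nat.pow_le_pow_right (by omega) (by omega)
  calc 2 * (k * p ^ e + r) = 2 * k * p ^ e + 2 * r := by ring
  _ ≤ (p - 1) * p ^ e + (p ^ e + 1) := by omega
  _ = p ^ (e + 1) + 1 := by omega
  _ ≤ p ^ i + 1 := by omega

lemma part2 (p : ℕ) (hp : p.Prime) (hodd : Odd p)
    (d c k e r : ℕ) (hk : 1 ≤ k) (hkp : k ≤ (p - 1) / 2)
    (hr : 2 * r = p ^ e - 1 ∨ 2 * r = p ^ e + 1)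
    (hd : d = k * p ^ e + r) (hc : 1 ≤ c) (hcd : c ≤ d) :
    (∏ j ∈ Finset.range c, (d + j).choose c).factorization p =
      (∏ j ∈ Finset.range c, (c + j).choose c).factorization p := by
  haveI : Fact p.Prime := ⟨hp⟩
  have hp3 : 3 ≤ p := by
    rcases hodd with ⟨w, hw⟩
    have := hp.two_le
    omega
  have hne1 : ∀ j ∈ Finset.range c, (d + j).choose c ≠ 0 :=
    fun j _ => Nat.ne_of_gt (Nat.choose_pos (by omega))
  have hne2 : ∀ j ∈ Finset.range c, (c + j).choose c ≠ 0 :=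
    fun j _ => Nat.ne_of_gt (Nat.choose_pos (by omega))
  rw [Nat.factorization_prod hne1, Nat.factorization_prod hne2,
    Finset.sum_apply', Finset.sum_apply']
  set B := Nat.log p (d + c) + 1 with hB
  have hval1 : ∀ j ∈ Finset.range c, ((d + j).choose c).factorization p =
      ((Finset.Ico 1 B).filter fun i => p ^ i ≤ c % p ^ i + (d - c + j) % p ^ i).card := by
    intro j hj
    rw [Finset.mem_range] at hj
    rw [Nat.factorization_def _ hp, padicValNat_choose (b := B) (by omega)
      (lt_of_le_of_lt (Nat.log_mono_right (show d + j ≤ d + c by omega)) (by rw [hB]; exact lt_add_one _))]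
    simp only [show d + j - c = d - c + j from by omega]
  have hval2 : ∀ j ∈ Finset.range c, ((c + j).choose c).factorization p =
      ((Finset.Ico 1 B).filter fun i => p ^ i ≤ c % p ^ i + j % p ^ i).card := by
    intro j hj
    rw [Finset.mem_range] at hj
    rw [Nat.factorization_def _ hp, padicValNat_choose (b := B) (by omega)
      (lt_of_le_of_lt (Nat.log_mono_right (show c + j ≤ d + c by omega)) (by rw [hB]; exact lt_add_one _))]
    simp only [show c + j - c = j from by omega]
  rw [Finset.sum_congr rfl hval1, Finset.sum_congr rfl hval2]
  simp only [Finset.card_filter]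
  rw [Finset.sum_comm]
  nth_rewrite 2 [Finset.sum_comm]
  apply Finset.sum_congr rfl
  intro i hi
  have hq : 0 < p ^ i := pow_pos (by omega) i
  rw [Finset.mem_Ico] at hi
  have key : ((Finset.range c).filter (fun j => p ^ i ≤ c % p ^ i + (d - c + j) % p ^ i)).card =
      ((Finset.range c).filter (fun j => p ^ i ≤ c % p ^ i + j % p ^ i)).card := by
    by_cases hie : i ≤ e
    · exact count_eq_central _ _ _ hq hcd (hd ▸ dmod p k e r i hodd hp3 hr hi.1 hie)
    · exact count_eq_small _ _ _ hq hcd (hd ▸ dsmall p k e r i hodd hp3 hkp hr (by omega))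
  simpa only [Finset.card_filter] using key

lemma prod_shift (m : ℕ) : ∀ a b : ℕ, a ≤ b →
    (∏ u ∈ Finset.Ico a b, (m + u + 1)) * (m + a).factorial = (m + b).factorial := by
  intro a b hab
  induction b, hab using Nat.le_induction with
  | base => simp
  | succ b hab ih =>
    rw [Finset.prod_Ico_succ_top hab]
    have : m + (b + 1) = (m + b) + 1 := by omega
    rw [this, Nat.factorial_succ]
    nlinarith [ih]

lemma prod_shiftQ (m a b : ℕ) (hab : a ≤ b) :
    (∏ u ∈ Finset.Ico a b, ((m : ℚ) + u + 1)) * (m + a).factorial = (m + b).factorial := by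
  exact_mod_cast prod_shift m a b hab

lemma descQ (n : ℕ) : ∀ i : ℕ, i ≤ n →
    (∏ u ∈ Finset.range i, ((n : ℚ) - u)) * (n - i).factorial = n.factorial := by
  intro i
  induction i with
  | zero => simp
  | succ i ih =>
    intro hin
    have ih' := ih (by omega)
    rw [Finset.prod_range_succ]
    have h1 : n - i = (n - (i + 1)) + 1 := by omega
    have h2 : (n - i).factorial = ((n - (i+1)) + 1) * (n - (i+1)).factorial := by
      rw [← Nat.factorial_succ, ← h1]
    have h3 : ((n : ℚ) - i) = (((n - (i+1)) + 1 : ℕ) : ℚ) := by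
      push_cast
      have : ((n - (i+1) : ℕ) : ℚ) = (n : ℚ) - (i + 1) := by
        push_cast [Nat.cast_sub hin]
        ring
      rw [this]; ring
    rw [h2] at ih'
    push_cast at ih' ⊢
    rw [h3]
    push_cast
    nlinarith [ih']

lemma entryQ (d c i m : ℕ) (hcd : c ≤ d) (hic : i < c) (hmc : m < c) :
    (d.choose (m + 1 + i) : ℚ) * (c + m).factorial * (d - 1 - m).factorial =
      (d.factorial : ℚ) * ((∏ u ∈ Finset.Ico (i + 1) c, ((m : ℚ) + 1 + u)) *
        ∏ u ∈ Finset.range i, ((d : ℚ) - u - ((m : ℚ) + 1))) := by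
  by_cases hk : m + 1 + i ≤ d
  · have h1 : (∏ u ∈ Finset.Ico (i + 1) c, ((m : ℚ) + 1 + u)) * (m + (i + 1)).factorial
        = (m + c).factorial := by
      have := prod_shiftQ m (i + 1) c hic
      convert this using 3
      ring
    have h2 : (∏ u ∈ Finset.range i, ((d : ℚ) - u - ((m : ℚ) + 1))) *
        (d - (m + 1 + i)).factorial = (d - 1 - m).factorial := by
      have hd := descQ (d - 1 - m) i (by omega)
      have hterm : ∀ u ∈ Finset.range i, ((d - 1 - m : ℕ) : ℚ) - u = (d : ℚ) - u - ((m:ℚ) + 1) := by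
        intro u hu
        rw [Nat.cast_sub (by omega), Nat.cast_sub (by omega)]
        push_cast
        ring
      rw [Finset.prod_congr rfl hterm] at hd
      have hidx : d - 1 - m - i = d - (m + 1 + i) := by omega
      rw [hidx] at hd
      exact hd
    have h3 : (d.choose (m + 1 + i) : ℚ) * (m + 1 + i).factorial *
        (d - (m + 1 + i)).factorial = d.factorial := by
      exact_mod_cast congrArg (Nat.cast : ℕ → ℚ)
        (Nat.choose_mul_factorial_mul_factorial hk)
    have hidx2 : m + (i + 1) = m + 1 + i := by omega
    rw [hidx2] at h1
    have hcm : c + m = m + c := by omega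
    rw [hcm, ← h1, ← h2, ← h3]
    ring
  · rw [Nat.choose_eq_zero_of_lt (by omega)]
    have hz : ∏ u ∈ Finset.range i, ((d : ℚ) - u - ((m : ℚ) + 1)) = 0 := by
      apply Finset.prod_eq_zero (Finset.mem_range.2 (show d - 1 - m < i by omega))
      rw [Nat.cast_sub (show m ≤ d - 1 by omega), Nat.cast_sub (show 1 ≤ d by omega)]
      push_cast
      ring
    rw [hz]
    ring

lemma diagQ (d c i : ℕ) (hcd : c ≤ d) (hic : i < c) :
    (d.factorial : ℚ) * ((∏ u ∈ Finset.Ico (i + 1) c, ((d : ℚ) - i + u)) *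
        ∏ u ∈ Finset.range i, ((d : ℚ) - u - ((d : ℚ) - i))) =
      ((d - 1 - i + c).factorial : ℚ) * i.factorial := by
  have h1 : (∏ u ∈ Finset.Ico (i + 1) c, ((d : ℚ) - i + u)) * d.factorial
      = (d - 1 - i + c).factorial := by
    have := prod_shiftQ (d - 1 - i) (i + 1) c hic
    have hterm : ∀ u ∈ Finset.Ico (i + 1) c, ((d - 1 - i : ℕ) : ℚ) + u + 1
        = (d : ℚ) - i + u := by
      intro u hu
      rw [Nat.cast_sub (by omega), Nat.cast_sub (by omega)]
      push_cast
      ring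
    rw [Finset.prod_congr rfl hterm] at this
    have hidx : d - 1 - i + (i + 1) = d := by omega
    rw [hidx] at this
    exact this
  have h2 : ∏ u ∈ Finset.range i, ((d : ℚ) - u - ((d : ℚ) - i)) = i.factorial := by
    have hd := descQ i i (le_refl i)
    have hterm : ∀ u ∈ Finset.range i, ((i : ℕ) : ℚ) - u = (d : ℚ) - u - ((d : ℚ) - i) := by
      intro u hu
      push_cast
      ring
    rw [Finset.prod_congr rfl hterm] at hd
    simpa using hd
  rw [h2, ← h1]
  ring

noncomputable def detQpoly (d c i : ℕ) : Polynomial ℚ :=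
  (∏ u ∈ Finset.Ico (i + 1) c, (X + C (u : ℚ))) *
    ∏ u ∈ Finset.range i, (C ((d : ℚ) - u) - X)

lemma detQpoly_natDegree (d c i : ℕ) (hic : i < c) :
    (detQpoly d c i).natDegree = c - 1 := by
  unfold detQpoly
  rw [Polynomial.natDegree_mul (Finset.prod_ne_zero_iff.2 fun u _ => X_add_C_ne_zero _)
    (Finset.prod_ne_zero_iff.2 fun u _ => by
      rw [show C ((d : ℚ) - u) - X = -(X - C ((d : ℚ) - u)) by ring]
      exact neg_ne_zero.2 (X_sub_C_ne_zero _)),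
    Polynomial.natDegree_prod _ _ (fun u _ => X_add_C_ne_zero _),
    Polynomial.natDegree_prod _ _ (fun u _ => by
      rw [show C ((d : ℚ) - u) - X = -(X - C ((d : ℚ) - u)) by ring]
      exact neg_ne_zero.2 (X_sub_C_ne_zero _))]
  simp only [natDegree_X_add_C]
  have : ∀ u ∈ Finset.range i, (C ((d : ℚ) - u) - X).natDegree = 1 := fun u _ => by
    rw [show C ((d : ℚ) - u) - X = -(X - C ((d : ℚ) - u)) by ring, natDegree_neg,
      natDegree_X_sub_C]
  rw [Finset.sum_congr rfl this]
  simp [Nat.card_Ico]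
  omega

lemma detQpoly_eval (d c i : ℕ) (x : ℚ) :
    (detQpoly d c i).eval x =
      (∏ u ∈ Finset.Ico (i + 1) c, (x + u)) * ∏ u ∈ Finset.range i, ((d : ℚ) - u - x) := by
  simp [detQpoly, eval_prod]

lemma detEval (d c : ℕ) (a : Fin c → ℚ) :
    (Matrix.of fun i j : Fin c => (detQpoly d c (i : ℕ)).eval (a j)).det =
      (Matrix.of fun i k : Fin c => (detQpoly d c (i : ℕ)).coeff (k : ℕ)).det *
        ∏ i : Fin c, ∏ j ∈ Finset.Ioi i, (a j - a i) := by
  rcases Nat.eq_zero_or_pos c with hc | hc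
  · subst hc
    simp [Matrix.det_fin_zero]
  have key : (Matrix.of fun i j : Fin c => (detQpoly d c (i : ℕ)).eval (a j)) =
      (Matrix.of fun i k : Fin c => (detQpoly d c (i : ℕ)).coeff (k : ℕ)) *
        (Matrix.vandermonde a).transpose := by
    ext i j
    rw [Matrix.mul_apply]
    simp only [Matrix.of_apply, Matrix.transpose_apply, Matrix.vandermonde]
    rw [Polynomial.eval_eq_sum_range' (n := c) (by rw [detQpoly_natDegree d c i i.2]; omega),
      ← Fin.sum_univ_eq_sum_range]
  rw [key, Matrix.det_mul, Matrix.det_transpose, Matrix.det_vandermonde]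


lemma detFormulaQ (d c : ℕ) (hc : 1 ≤ c) (hcd : c ≤ d) :
    ((toeplitzBinom d c).det : ℚ) *
        ∏ m ∈ Finset.range c, (((c + m).factorial : ℚ) * ((d - 1 - m).factorial : ℚ)) =
      ∏ i ∈ Finset.range c, (((d - 1 - i + c).factorial : ℚ) * (i.factorial : ℚ)) := by
  set MQ : Matrix (Fin c) (Fin c) ℚ :=
    Matrix.of (fun i j : Fin c => ((d.choose (c + (i : ℕ) - (j : ℕ)) : ℕ) : ℚ)) with hMQ
  have hmap : ((toeplitzBinom d c).det : ℚ) = MQ.det := by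
    have hm : (toeplitzBinom d c).map (Int.castRingHom ℚ) = MQ := by
      ext i j
      simp only [toeplitzBinom, Matrix.map_apply, Matrix.of_apply, hMQ]
      rw [if_pos (show (j : ℕ) ≤ c + (i : ℕ) by omega)]
      push_cast
      rfl
    rw [← hm]
    exact RingHom.map_det (Int.castRingHom ℚ) _
  set a1 : Fin c → ℚ := fun j => (c : ℚ) - (j : ℕ) with ha1
  set a2 : Fin c → ℚ := fun j => (d : ℚ) - (j : ℕ) with ha2
  set s : Fin c → ℚ := fun j =>
    ((c + (c - 1 - (j : ℕ))).factorial : ℚ) * ((d - 1 - (c - 1 - (j : ℕ))).factorial : ℚ)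
    with hs
  have hscale : MQ * Matrix.diagonal s =
      (d.factorial : ℚ) • Matrix.of (fun i j : Fin c => (detQpoly d c (i : ℕ)).eval (a1 j)) := by
    ext i j
    rw [Matrix.mul_diagonal]
    simp only [Matrix.smul_apply, Matrix.of_apply, smul_eq_mul, hMQ, hs, ha1]
    have hm : (c : ℚ) - (j : ℕ) = ((c - 1 - (j : ℕ) : ℕ) : ℚ) + 1 := by
      have hj : (j : ℕ) < c := j.2
      rw [Nat.cast_sub (by omega), Nat.cast_sub (by omega)]
      push_cast
      ring
    rw [hm, detQpoly_eval]
    have he := entryQ d c (i : ℕ) (c - 1 - (j : ℕ)) hcd i.2 (by omega)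
    rw [show c + (i : ℕ) - (j : ℕ) = (c - 1 - (j : ℕ)) + 1 + (i : ℕ) from by
      have hj : (j : ℕ) < c := j.2
      omega]
    calc (d.choose ((c - 1 - (j:ℕ)) + 1 + (i:ℕ)) : ℚ) *
          (((c + (c - 1 - (j:ℕ))).factorial : ℚ) * ((d - 1 - (c - 1 - (j:ℕ))).factorial : ℚ))
        = (d.choose ((c - 1 - (j:ℕ)) + 1 + (i:ℕ)) : ℚ) *
          ((c + (c - 1 - (j:ℕ))).factorial : ℚ) * ((d - 1 - (c - 1 - (j:ℕ))).factorial : ℚ) := by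
          ring
      _ = (d.factorial : ℚ) * ((∏ u ∈ Finset.Ico ((i:ℕ) + 1) c, (((c - 1 - (j:ℕ) : ℕ) : ℚ) + 1 + u)) *
          ∏ u ∈ Finset.range (i:ℕ), ((d : ℚ) - u - (((c - 1 - (j:ℕ) : ℕ) : ℚ) + 1))) := he
  have htri : (Matrix.of fun i j : Fin c => (detQpoly d c (i : ℕ)).eval (a2 j)).det =
      ∏ i : Fin c, (detQpoly d c (i : ℕ)).eval (a2 i) := by
    apply Matrix.det_of_upperTriangular
    intro i j hij
    simp only [Matrix.of_apply]
    rw [detQpoly_eval]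
    have hz : ∏ u ∈ Finset.range (i : ℕ), ((d : ℚ) - u - a2 j) = 0 := by
      apply Finset.prod_eq_zero (Finset.mem_range.2 (show (j : ℕ) < (i : ℕ) from hij))
      simp only [ha2]
      ring
    rw [hz, mul_zero]
  have hvdm : (∏ i : Fin c, ∏ j ∈ Finset.Ioi i, (a1 j - a1 i)) =
      ∏ i : Fin c, ∏ j ∈ Finset.Ioi i, (a2 j - a2 i) := by
    refine Finset.prod_congr rfl fun i _ => Finset.prod_congr rfl fun j _ => ?_
    simp only [ha1, ha2]
    ring
  have hkey : MQ.det * ∏ j : Fin c, s j =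
      ∏ i : Fin c, ((d.factorial : ℚ) * (detQpoly d c (i : ℕ)).eval (a2 i)) := by
    have h1 : MQ.det * ∏ j : Fin c, s j = (MQ * Matrix.diagonal s).det := by
      rw [Matrix.det_mul, Matrix.det_diagonal]
    rw [h1, hscale, Matrix.det_smul, detEval, hvdm, ← detEval, htri, Fintype.card_fin,
      Finset.prod_mul_distrib]
    congr 1
    rw [Finset.prod_const, Finset.card_univ, Fintype.card_fin]
  have hdiag : ∀ i : Fin c, (d.factorial : ℚ) * (detQpoly d c (i : ℕ)).eval (a2 i) =
      ((d - 1 - (i:ℕ) + c).factorial : ℚ) * ((i:ℕ).factorial : ℚ) := by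
    intro i
    rw [detQpoly_eval]
    have := diagQ d c (i : ℕ) hcd i.2
    simp only [ha2]
    exact this
  rw [Finset.prod_congr rfl (fun i _ => hdiag i)] at hkey
  rw [hmap]
  rw [show (∏ j : Fin c, s j) = ∏ j ∈ Finset.range c,
      (((c + (c - 1 - j)).factorial : ℚ) * ((d - 1 - (c - 1 - j)).factorial : ℚ)) from
    Fin.prod_univ_eq_prod_range
      (fun j => ((c + (c - 1 - j)).factorial : ℚ) * ((d - 1 - (c - 1 - j)).factorial : ℚ)) c]
    at hkey
  rw [Fin.prod_univ_eq_prod_range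
    (fun i => ((d - 1 - i + c).factorial : ℚ) * ((i).factorial : ℚ)) c] at hkey
  rw [← Finset.prod_range_reflect (fun m => ((c + m).factorial : ℚ) * ((d - 1 - m).factorial : ℚ)) c]
  exact hkey

lemma prodIdentN (d c : ℕ) (hc : 1 ≤ c) (hcd : c ≤ d) :
    (∏ j ∈ Finset.range c, (d + j).choose c) *
        ∏ m ∈ Finset.range c, ((c + m).factorial * (d - 1 - m).factorial) =
      (∏ j ∈ Finset.range c, (c + j).choose c) *
        ∏ i ∈ Finset.range c, ((d - 1 - i + c).factorial * i.factorial) := by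
  have hrefl1 : ∏ m ∈ Finset.range c, (d - 1 - m).factorial =
      ∏ j ∈ Finset.range c, (d - c + j).factorial := by
    rw [← Finset.prod_range_reflect (fun j => (d - c + j).factorial) c]
    refine Finset.prod_congr rfl fun m hm => ?_
    rw [Finset.mem_range] at hm
    congr 1
    omega
  have hrefl2 : ∏ i ∈ Finset.range c, (d - 1 - i + c).factorial =
      ∏ j ∈ Finset.range c, (d + j).factorial := by
    rw [← Finset.prod_range_reflect (fun j => (d + j).factorial) c]
    refine Finset.prod_congr rfl fun m hm => ?_
    rw [Finset.mem_range] at hm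
    congr 1
    omega
  have hcancel : ∀ x y : ℕ, x * c.factorial ^ c = y * c.factorial ^ c → x = y :=
    fun x y h => Nat.eq_of_mul_eq_mul_right (pow_pos c.factorial_pos c) h
  apply hcancel
  rw [Finset.prod_mul_distrib, Finset.prod_mul_distrib, hrefl1, hrefl2]
  have hfc : c.factorial ^ c = ∏ _j ∈ Finset.range c, c.factorial := by
    rw [Finset.prod_const, Finset.card_range]
  have hN : (∏ j ∈ Finset.range c, (d + j).choose c) *
      ((∏ j ∈ Finset.range c, (d - c + j).factorial) * c.factorial ^ c) =
      ∏ j ∈ Finset.range c, (d + j).factorial := by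
    rw [hfc, ← Finset.prod_mul_distrib, ← Finset.prod_mul_distrib]
    refine Finset.prod_congr rfl fun j hj => ?_
    have h := Nat.choose_mul_factorial_mul_factorial (show c ≤ d + j by omega)
    rw [show d + j - c = d - c + j from by omega] at h
    calc (d + j).choose c * ((d - c + j).factorial * c.factorial)
        = (d + j).choose c * c.factorial * (d - c + j).factorial := by ring
      _ = (d + j).factorial := h
  have hD : (∏ j ∈ Finset.range c, (c + j).choose c) *
      ((∏ j ∈ Finset.range c, j.factorial) * c.factorial ^ c) =
      ∏ j ∈ Finset.range c, (c + j).factorial := by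
    rw [hfc, ← Finset.prod_mul_distrib, ← Finset.prod_mul_distrib]
    refine Finset.prod_congr rfl fun j hj => ?_
    have h := Nat.choose_mul_factorial_mul_factorial (show c ≤ c + j by omega)
    rw [show c + j - c = j from by omega] at h
    calc (c + j).choose c * (j.factorial * c.factorial)
        = (c + j).choose c * c.factorial * j.factorial := by ring
      _ = (c + j).factorial := h
  calc (∏ j ∈ Finset.range c, (d + j).choose c) *
        ((∏ m ∈ Finset.range c, (c + m).factorial) * ∏ j ∈ Finset.range c, (d - c + j).factorial) *
        c.factorial ^ c
      = ((∏ j ∈ Finset.range c, (d + j).choose c) *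
          ((∏ j ∈ Finset.range c, (d - c + j).factorial) * c.factorial ^ c)) *
          ∏ m ∈ Finset.range c, (c + m).factorial := by ring
    _ = (∏ j ∈ Finset.range c, (d + j).factorial) * ∏ m ∈ Finset.range c, (c + m).factorial := by
        rw [hN]
    _ = ((∏ j ∈ Finset.range c, (c + j).choose c) *
          ((∏ j ∈ Finset.range c, j.factorial) * c.factorial ^ c)) *
          ∏ j ∈ Finset.range c, (d + j).factorial := by rw [hD]; ring
    _ = (∏ j ∈ Finset.range c, (c + j).choose c) *
          ((∏ j ∈ Finset.range c, (d + j).factorial) * ∏ i ∈ Finset.range c, i.factorial) *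
          c.factorial ^ c := by ring

lemma detFormula (d c : ℕ) (hc : 1 ≤ c) (hcd : c ≤ d) :
    (toeplitzBinom d c).det * ((∏ j ∈ Finset.range c, (c + j).choose c : ℕ) : ℤ) =
      ((∏ j ∈ Finset.range c, (d + j).choose c : ℕ) : ℤ) := by
  set X : ℕ := ∏ m ∈ Finset.range c, ((c + m).factorial * (d - 1 - m).factorial) with hX
  set Y : ℕ := ∏ i ∈ Finset.range c, ((d - 1 - i + c).factorial * i.factorial) with hY
  have h1 : (toeplitzBinom d c).det * (X : ℤ) = (Y : ℤ) := by
    have := detFormulaQ d c hc hcd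
    have hcast : ((toeplitzBinom d c).det : ℚ) * ((X : ℕ) : ℚ) = ((Y : ℕ) : ℚ) := by
      push_cast [hX, hY]
      push_cast at this
      convert this using 2
    exact_mod_cast hcast
  have h2 : ((∏ j ∈ Finset.range c, (d + j).choose c : ℕ) : ℤ) * (X : ℤ) =
      ((∏ j ∈ Finset.range c, (c + j).choose c : ℕ) : ℤ) * (Y : ℤ) := by
    exact_mod_cast congrArg (Nat.cast : ℕ → ℤ) (prodIdentN d c hc hcd)
  have hX0 : (X : ℤ) ≠ 0 := by
    have : 0 < X := Finset.prod_pos fun m _ => Nat.mul_pos (Nat.factorial_pos _) (Nat.factorial_pos _)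
    exact_mod_cast this.ne'
  apply mul_right_cancel₀ hX0
  calc (toeplitzBinom d c).det * ((∏ j ∈ Finset.range c, (c + j).choose c : ℕ) : ℤ) * (X : ℤ)
      = ((∏ j ∈ Finset.range c, (c + j).choose c : ℕ) : ℤ) *
        ((toeplitzBinom d c).det * (X : ℤ)) := by ring
    _ = ((∏ j ∈ Finset.range c, (c + j).choose c : ℕ) : ℤ) * (Y : ℤ) := by rw [h1]
    _ = ((∏ j ∈ Finset.range c, (d + j).choose c : ℕ) : ℤ) * (X : ℤ) := h2.symm


theorem stmt4 (p : ℕ) (hp : p.Prime) (hodd : Odd p)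
    (d c k e r : ℕ) (hk : 1 ≤ k) (hkp : k ≤ (p - 1) / 2)
    (hr : 2 * r = p ^ e - 1 ∨ 2 * r = p ^ e + 1)
    (hd : d = k * p ^ e + r) (hc : 1 ≤ c) (hcd : c ≤ d) :
    ¬ ((p : ℤ) ∣ (toeplitzBinom d c).det) ∧
      (∏ j ∈ Finset.range c, (d + j).choose c).factorization p =
        (∏ j ∈ Finset.range c, (c + j).choose c).factorization p := by
  have hfac := part2 p hp hodd d c k e r hk hkp hr hd hc hcd
  refine ⟨?_, hfac⟩
  intro hdvd
  haveI : Fact p.Prime := ⟨hp⟩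
  have hdet := detFormula d c hc hcd
  have hN0 : (∏ j ∈ Finset.range c, (d + j).choose c) ≠ 0 :=
    Nat.ne_of_gt (Finset.prod_pos fun j _ => Nat.choose_pos (by omega))
  set v := (∏ j ∈ Finset.range c, (c + j).choose c).factorization p with hv
  have hordD : (p : ℤ) ^ v ∣ ((∏ j ∈ Finset.range c, (c + j).choose c : ℕ) : ℤ) := by
    exact_mod_cast Int.natCast_dvd_natCast.2 (Nat.ordProj_dvd _ p)
  have h1 : (p : ℤ) ^ (v + 1) ∣ ((∏ j ∈ Finset.range c, (d + j).choose c : ℕ) : ℤ) := by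
    rw [← hdet, pow_succ']
    exact mul_dvd_mul hdvd hordD
  have h2 : p ^ (v + 1) ∣ (∏ j ∈ Finset.range c, (d + j).choose c) := by
    exact_mod_cast h1
  have h3 := (Nat.Prime.pow_dvd_iff_le_factorization hp hN0).1 h2
  rw [hfac] at h3
  omega
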